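/- For all integers N ≥ 1, r ≥ 1 and n ≥ 1, B^{(r)}_{N,n} = (−1)^n · n! · det(A), where A is the n×n matrix with entries A_{i,j} = M_r(i−j+1) for 1 ≤ j ≤ i ≤ n, A_{i,i+1} = 1 for 1 ≤ i ≤ n−1, and A_{i,j} = 0 for j > i+1. -/

import Mathlib

/-- The power series ∑_{i≥0} (N!/(N+i)!) xⁱ over ℚ. -/
noncomputable def hgSeries (N : ℕ) : PowerSeries ℚ :=
  PowerSeries.mk fun i => (N.factorial : ℚ) / ((N + i).factorial : ℚ)

/-- The higher order hypergeometric Bernoulli number `B^{(r)}_{N,n}`, defined so that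
`∑ (B^{(r)}_{N,n}/n!) xⁿ` is the r-th power of the multiplicative inverse of
`hgSeries N` in ℚ[[x]]. -/
noncomputable def hBr (N r n : ℕ) : ℚ :=
  (n.factorial : ℚ) * PowerSeries.coeff n ((hgSeries N)⁻¹ ^ r)

/-- `M_r(e) = ∑_{i₁+⋯+i_r=e} (N!)^r / ((N+i₁)! ⋯ (N+i_r)!)`. -/
noncomputable def M (N r e : ℕ) : ℚ :=
  ∑ i ∈ Finset.Nat.antidiagonalTuple r e,
    (N.factorial : ℚ) ^ r / ∏ j, ((N + i j).factorial : ℚ)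

lemma adT_succ_sum (f : ℕ → ℚ) (r n : ℕ) :
    ∑ x ∈ Finset.Nat.antidiagonalTuple (r + 1) n, ∏ j, f (x j)
      = ∑ p ∈ Finset.HasAntidiagonal.antidiagonal n, f p.1 *
          ∑ x ∈ Finset.Nat.antidiagonalTuple r p.2, ∏ j, f (x j) := by
  simp_rw [Finset.mul_sum]
  rw [Finset.sum_sigma']
  refine Finset.sum_nbij' (i := fun y => ⟨(y 0, ∑ j : Fin r, y j.succ), Fin.tail y⟩)
    (j := fun q => Fin.cons q.1.1 q.2) ?_ ?_ ?_ ?_ ?_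
  · intro y hy
    rw [Finset.Nat.mem_antidiagonalTuple] at hy
    refine Finset.mem_sigma.2 ⟨Finset.HasAntidiagonal.mem_antidiagonal.2 ?_, ?_⟩
    · rw [← hy, Fin.sum_univ_succ]
    · exact Finset.Nat.mem_antidiagonalTuple.2 rfl
  · rintro ⟨⟨a, b⟩, x⟩ hq
    rw [Finset.mem_sigma, Finset.HasAntidiagonal.mem_antidiagonal, Finset.Nat.mem_antidiagonalTuple] at hq
    refine Finset.Nat.mem_antidiagonalTuple.2 ?_
    rw [Fin.sum_univ_succ]
    simp only [Fin.cons_zero, Fin.cons_succ]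
    rw [hq.2, hq.1]
  · intro y _
    exact Fin.cons_self_tail y
  · rintro ⟨⟨a, b⟩, x⟩ hq
    rw [Finset.mem_sigma, Finset.HasAntidiagonal.mem_antidiagonal, Finset.Nat.mem_antidiagonalTuple] at hq
    simp only [Fin.cons_zero, Fin.cons_succ, Fin.tail_cons]
    congr 1
    exact Prod.ext rfl hq.2
  · intro y _
    rw [Fin.prod_univ_succ]
    rfl

lemma coeff_pow_tuple (φ : PowerSeries ℚ) (r n : ℕ) :
    PowerSeries.coeff n (φ ^ r) = ∑ x ∈ Finset.Nat.antidiagonalTuple r n,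
      ∏ j, PowerSeries.coeff (x j) φ := by
  induction r generalizing n with
  | zero =>
    cases n with
    | zero => simp [Finset.Nat.antidiagonalTuple_zero_zero]
    | succ m => simp [Finset.Nat.antidiagonalTuple_zero_succ, PowerSeries.coeff_one]
  | succ r ih =>
    rw [pow_succ', PowerSeries.coeff_mul]
    simp_rw [ih]
    exact (adT_succ_sum (fun k => PowerSeries.coeff k φ) r n).symm

/-- Determinant expression for `B^{(r)}_{N,n}`.  Rows and columns are 0-indexed:
the (i,j) entry with j ≤ i is `M_r(i-j+1)`, the superdiagonal entries are 1,
and all other entries are 0. -/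
theorem stmt12 (N r n : ℕ) (hN : 1 ≤ N) (hr : 1 ≤ r) (hn : 1 ≤ n) :
    hBr N r n = (-1 : ℚ) ^ n * (n.factorial : ℚ) *
      (Matrix.of fun i j : Fin n =>
        if (j : ℕ) = (i : ℕ) + 1 then (1 : ℚ)
        else if (j : ℕ) ≤ (i : ℕ) then M N r ((i : ℕ) - (j : ℕ) + 1)
        else 0).det := by
  -- notation
  set c : ℕ → ℚ := fun e => PowerSeries.coeff e ((hgSeries N) ^ r) with hc
  set bb : ℕ → ℚ := fun m => PowerSeries.coeff m ((hgSeries N)⁻¹ ^ r) with hbb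
  have hcoeff : ∀ e, PowerSeries.coeff e (hgSeries N)
      = (N.factorial : ℚ) / ((N + e).factorial : ℚ) := fun e => by
    simp [hgSeries]
  have hMc : ∀ e, M N r e = c e := by
    intro e
    show M N r e = PowerSeries.coeff e (hgSeries N ^ r)
    rw [coeff_pow_tuple, M]
    refine Finset.sum_congr rfl fun x _ => ?_
    simp_rw [hcoeff]
    rw [Finset.prod_div_distrib, Finset.prod_const, Finset.card_univ, Fintype.card_fin]
  have hfacne : ((N.factorial : ℚ)) ≠ 0 := Nat.cast_ne_zero.mpr (Nat.factorial_ne_zero N)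
  have hcc : PowerSeries.constantCoeff (hgSeries N) ≠ 0 := by
    have : PowerSeries.constantCoeff (hgSeries N)
        = (N.factorial : ℚ) / ((N + 0).factorial : ℚ) := by
      rw [← PowerSeries.coeff_zero_eq_constantCoeff_apply, hcoeff]
    rw [this, Nat.add_zero]
    exact div_ne_zero hfacne hfacne
  have hone : (hgSeries N) ^ r * ((hgSeries N)⁻¹) ^ r = 1 := by
    rw [← mul_pow, PowerSeries.mul_inv_cancel _ hcc, one_pow]
  have hc0 : c 0 = 1 := by
    rw [hc]
    simp only [PowerSeries.coeff_zero_eq_constantCoeff_apply, map_pow]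
    rw [← PowerSeries.coeff_zero_eq_constantCoeff_apply, hcoeff]
    simp [hfacne]
  -- convolution identity
  have hconv : ∀ m : ℕ, (∑ k ∈ Finset.range (m + 1), c (m - k) * bb k)
      = if m = 0 then 1 else 0 := by
    intro m
    have h1 : PowerSeries.coeff m ((hgSeries N)⁻¹ ^ r * (hgSeries N) ^ r)
        = PowerSeries.coeff m 1 := by rw [mul_comm, hone]
    rw [PowerSeries.coeff_mul, Finset.Nat.sum_antidiagonal_eq_sum_range_succ_mk] at h1
    rw [PowerSeries.coeff_one] at h1
    rw [← h1]
    exact Finset.sum_congr rfl fun k hk => mul_comm _ _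
  -- the Toeplitz matrix
  set T : Matrix (Fin (n + 1)) (Fin (n + 1)) ℚ :=
    Matrix.of (fun i j : Fin (n + 1) =>
      if (j : ℕ) ≤ (i : ℕ) then c ((i : ℕ) - (j : ℕ)) else 0) with hT
  have hdet : T.det = 1 := by
    rw [Matrix.det_of_lowerTriangular T (fun i j hij => by
      simp only [hT, Matrix.of_apply]
      rw [if_neg (by exact Nat.not_le.mpr hij)])]
    simp [hT, hc0]
  set e0 : Fin (n + 1) → ℚ := fun i => if i = 0 then 1 else 0 with he0
  set bv : Fin (n + 1) → ℚ := fun j => bb (j : ℕ) with hbv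
  have hmul : T.mulVec bv = e0 := by
    funext i
    show ∑ j : Fin (n + 1), T i j * bv j = e0 i
    have step1 : ∑ j : Fin (n + 1), T i j * bv j
        = ∑ k ∈ Finset.range (n + 1),
            (if k ≤ (i : ℕ) then c ((i : ℕ) - k) else 0) * bb k := by
      rw [← Fin.sum_univ_eq_sum_range
        (fun k => (if k ≤ (i : ℕ) then c ((i : ℕ) - k) else 0) * bb k) (n + 1)]
      exact Finset.sum_congr rfl fun j _ => rfl
    have step2 : ∑ k ∈ Finset.range (n + 1),
          (if k ≤ (i : ℕ) then c ((i : ℕ) - k) else 0) * bb k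
        = ∑ k ∈ Finset.range ((i : ℕ) + 1), c ((i : ℕ) - k) * bb k := by
      rw [← Finset.sum_subset (Finset.range_subset_range.2 i.isLt)
        (fun k _ hk => by
          rw [if_neg, zero_mul]
          intro hle
          exact hk (Finset.mem_range.2 (Nat.lt_succ_of_le hle)))]
      refine Finset.sum_congr rfl fun k hk => ?_
      rw [if_pos (Nat.lt_succ_iff.mp (Finset.mem_range.mp hk))]
    rw [step1, step2, hconv]
    simp only [he0, Fin.ext_iff, Fin.val_zero]
  -- uniqueness via Cramer
  have hu : IsUnit T.det := by rw [hdet]; exact isUnit_one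
  have hcram : T.mulVec (T.cramer e0) = e0 := by
    rw [Matrix.mulVec_cramer, hdet, one_smul]
  have hbveq : bv = T.cramer e0 := by
    have h1 : T.mulVec bv = T.mulVec (T.cramer e0) := hmul.trans hcram.symm
    have h2 := congrArg (fun v => T⁻¹.mulVec v) h1
    simp only [Matrix.mulVec_mulVec, Matrix.nonsing_inv_mul T hu,
      Matrix.one_mulVec] at h2
    exact h2
  have hbn : bb n = (T.updateCol (Fin.last n) e0).det := by
    have : bv (Fin.last n) = T.cramer e0 (Fin.last n) := by rw [hbveq]
    rw [← Matrix.cramer_apply]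
    exact this
  set A : Matrix (Fin n) (Fin n) ℚ := Matrix.of fun i j : Fin n =>
    if (j : ℕ) = (i : ℕ) + 1 then (1 : ℚ)
    else if (j : ℕ) ≤ (i : ℕ) then M N r ((i : ℕ) - (j : ℕ) + 1)
    else 0 with hA
  set U : Matrix (Fin (n + 1)) (Fin (n + 1)) ℚ := T.updateCol (Fin.last n) e0 with hU
  set σ : Equiv.Perm (Fin (n + 1)) := (finRotate (n + 1))⁻¹ with hσ
  have hσ0 : σ 0 = Fin.last n := by
    rw [hσ, Equiv.Perm.inv_def, Equiv.symm_apply_eq, finRotate_last]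
  have hσsucc : ∀ j : Fin n, σ j.succ = j.castSucc := fun j => by
    rw [hσ, Equiv.Perm.inv_def, Equiv.symm_apply_eq, finRotate_succ_apply,
      Fin.coeSucc_eq_succ]
  have hperm : (U.submatrix id σ).det = (-1 : ℚ) ^ n * U.det := by
    rw [Matrix.det_permute']
    congr 2
    rw [hσ, Equiv.Perm.sign_inv, sign_finRotate]
    simp
  have hpow : (-1 : ℚ) ^ n * (-1 : ℚ) ^ n = 1 := by
    rw [← pow_add]
    exact Even.neg_one_pow ⟨n, rfl⟩
  have hUdet : U.det = (-1 : ℚ) ^ n * (U.submatrix id σ).det := by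
    rw [hperm, ← mul_assoc, hpow, one_mul]
  have hW : (U.submatrix id σ).det = A.det := by
    rw [Matrix.det_succ_column_zero]
    rw [Finset.sum_eq_single (0 : Fin (n + 1))]
    · simp only [Fin.val_zero, pow_zero, one_mul, Matrix.submatrix_apply, id_eq]
      have hW00 : U (0 : Fin (n + 1)) (σ 0) = 1 := by
        rw [hσ0, hU, Matrix.updateCol_apply, if_pos rfl]
        simp [he0]
      rw [hW00, one_mul]
      congr 1
      ext i j
      have h1 : (Fin.succAbove 0 i) = i.succ := rfl
      rw [Matrix.submatrix_apply, Matrix.submatrix_apply, h1, hσsucc j, hU,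
        Matrix.updateCol_apply, if_neg (Fin.castSucc_lt_last j).ne]
      show (if (j.castSucc : ℕ) ≤ (i.succ : ℕ) then c ((i.succ : ℕ) - (j.castSucc : ℕ)) else 0)
        = A i j
      rw [Fin.val_succ, Fin.coe_castSucc, hA]
      show _ = if (j : ℕ) = (i : ℕ) + 1 then (1 : ℚ)
        else if (j : ℕ) ≤ (i : ℕ) then M N r ((i : ℕ) - (j : ℕ) + 1) else 0
      by_cases h2 : (j : ℕ) = (i : ℕ) + 1
      · rw [if_pos h2, if_pos (by omega), h2]
        simpa using hc0
      · rw [if_neg h2]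
        by_cases h3 : (j : ℕ) ≤ (i : ℕ)
        · rw [if_pos (by omega), if_pos h3, hMc]
          congr 1
          omega
        · rw [if_neg (by omega), if_neg h3]
    · intro i _ hi
      have : U i (σ 0) = 0 := by
        rw [hσ0, hU, Matrix.updateCol_apply, if_pos rfl, he0]
        exact if_neg hi
      rw [Matrix.submatrix_apply, id_eq, this, mul_zero, zero_mul]
    · intro h
      exact absurd (Finset.mem_univ _) h
  have hfinal : bb n = (-1 : ℚ) ^ n * A.det := by rw [hbn, hUdet, hW]
  show (n.factorial : ℚ) * bb n = _
  rw [hfinal]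
  ring
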